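/- Let Φ₂(a, b, ρ) be the joint CDF of a bivariate standard Gaussian with correlation ρ, and define the Gaussian copula term C(a, b, ρ) = Φ₂(a, b, ρ) − Φ(a)Φ(b). Then |C(a, b, ρ)| ≤ (|ρ|/4)·exp(−(a² + b²)/4) for all a, b ∈ ℝ and ρ ∈ [−1, 1]. -/

import Mathlib

open MeasureTheory Real

/-- The standard normal probability density function. -/
noncomputable def stdGaussianPDF (t : ℝ) : ℝ :=
  (Real.sqrt (2 * Real.pi))⁻¹ * Real.exp (-t ^ 2 / 2)

/-- The standard normal cumulative distribution function. -/
noncomputable def stdNormalCDF (x : ℝ) : ℝ :=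
  ∫ t in Set.Iic x, stdGaussianPDF t

/-- Joint CDF of the bivariate standard Gaussian with correlation `ρ`, defined via the
representation `(z₁, z₂) = (X, ρX + √(1−ρ²)Y)` with `X, Y` independent standard Gaussians
(valid for all `ρ ∈ [−1,1]`). -/
noncomputable def bivStdNormalCDF (a b ρ : ℝ) : ℝ :=
  ∫ p in {q : ℝ × ℝ | q.1 ≤ a ∧ ρ * q.1 + Real.sqrt (1 - ρ ^ 2) * q.2 ≤ b},
    stdGaussianPDF p.1 * stdGaussianPDF p.2

open Set Filter Topology

lemma sgp_nonneg (t : ℝ) : 0 ≤ stdGaussianPDF t := by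
  unfold stdGaussianPDF; positivity

lemma sgp_cont : Continuous stdGaussianPDF := by
  unfold stdGaussianPDF; continuity

lemma sgp_integrable : Integrable stdGaussianPDF := by
  unfold stdGaussianPDF
  apply Integrable.const_mul
  have h := integrable_exp_neg_mul_sq (by norm_num : (0:ℝ) < 1/2)
  convert h using 2 with x
  ring_nf

lemma sgp_integral : ∫ t, stdGaussianPDF t = 1 := by
  unfold stdGaussianPDF
  rw [integral_const_mul]
  have : ∀ t : ℝ, Real.exp (-t ^ 2 / 2) = Real.exp (-(1/2 : ℝ) * t ^ 2) := by
    intro t; ring_nf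
  simp_rw [this, integral_gaussian]
  rw [show Real.pi / (1/2 : ℝ) = 2 * Real.pi by ring]
  rw [inv_mul_cancel₀ (by positivity)]

lemma cdf_nonneg (x : ℝ) : 0 ≤ stdNormalCDF x :=
  setIntegral_nonneg measurableSet_Iic fun t _ => sgp_nonneg t

lemma cdf_le_one (x : ℝ) : stdNormalCDF x ≤ 1 := by
  rw [← sgp_integral]
  exact setIntegral_le_integral sgp_integrable (Filter.Eventually.of_forall sgp_nonneg)

lemma cdf_sub (c x : ℝ) : stdNormalCDF x - stdNormalCDF c = ∫ t in c..x, stdGaussianPDF t := by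
  have h1 : IntegrableOn stdGaussianPDF (Iic x) volume := sgp_integrable.integrableOn
  have h2 : IntegrableOn stdGaussianPDF (Iic c) volume := sgp_integrable.integrableOn
  unfold stdNormalCDF
  have h := intervalIntegral.integral_Iic_sub_Iic (f := stdGaussianPDF) (μ := volume)
    (a := c) (b := x) h2 h1
  linarith

lemma cdf_hasDerivAt (x : ℝ) : HasDerivAt stdNormalCDF (stdGaussianPDF x) x := by
  have : stdNormalCDF = fun y => stdNormalCDF 0 + ∫ t in (0:ℝ)..y, stdGaussianPDF t := by
    ext y; rw [← cdf_sub]; ring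
  rw [this]
  exact (intervalIntegral.integral_hasDerivAt_right
    (sgp_integrable.intervalIntegrable)
    (sgp_cont.aestronglyMeasurable.stronglyMeasurableAtFilter)
    sgp_cont.continuousAt).const_add _

lemma cdf_cont : Continuous stdNormalCDF :=
  continuous_iff_continuousAt.2 fun x => (cdf_hasDerivAt x).continuousAt

lemma cdf_tendsto_atTop : Tendsto stdNormalCDF atTop (𝓝 1) := by
  have h1 : Tendsto (fun x => stdNormalCDF 0 + ∫ t in (0:ℝ)..x, stdGaussianPDF t) atTop
      (𝓝 (stdNormalCDF 0 + ∫ t in Ioi (0:ℝ), stdGaussianPDF t)) :=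
    (intervalIntegral_tendsto_integral_Ioi 0 sgp_integrable.integrableOn tendsto_id).const_add _
  have h2 : stdNormalCDF 0 + ∫ t in Ioi (0:ℝ), stdGaussianPDF t = 1 := by
    rw [← sgp_integral]
    unfold stdNormalCDF
    rw [← integral_add_compl measurableSet_Iic sgp_integrable, compl_Iic]
  rw [← h2]
  refine h1.congr fun x => ?_
  rw [← cdf_sub]; ring

lemma cdf_tendsto_atBot : Tendsto stdNormalCDF atBot (𝓝 0) := by
  have h1 : Tendsto (fun x => stdNormalCDF 0 - ∫ t in x..(0:ℝ), stdGaussianPDF t) atBot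
      (𝓝 (stdNormalCDF 0 - ∫ t in Iic (0:ℝ), stdGaussianPDF t)) :=
    ((intervalIntegral_tendsto_integral_Iic 0 sgp_integrable.integrableOn tendsto_id).const_sub _)
  have h2 : stdNormalCDF 0 - ∫ t in Iic (0:ℝ), stdGaussianPDF t = 0 := by
    unfold stdNormalCDF; ring
  rw [← h2]
  refine h1.congr fun x => ?_
  have := cdf_sub x 0
  rw [← this]; ring

lemma biv_rep (a b ρ : ℝ) :
    bivStdNormalCDF a b ρ =
      ∫ x in Iic a, stdGaussianPDF x *
        ∫ y in {y : ℝ | ρ * x + Real.sqrt (1 - ρ ^ 2) * y ≤ b}, stdGaussianPDF y := by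
  set s := Real.sqrt (1 - ρ ^ 2) with hs
  have hT : ∀ x : ℝ, MeasurableSet {y : ℝ | ρ * x + s * y ≤ b} := fun x =>
    (isClosed_le (continuous_const.add (continuous_const.mul continuous_id)) continuous_const).measurableSet
  have hS : MeasurableSet {q : ℝ × ℝ | q.1 ≤ a ∧ ρ * q.1 + s * q.2 ≤ b} := by
    apply MeasurableSet.inter
    · exact isClosed_le continuous_fst continuous_const |>.measurableSet
    · exact isClosed_le ((continuous_const.mul continuous_fst).add (continuous_const.mul continuous_snd)) continuous_const |>.measurableSet
  have hint2 : Integrable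
      (({q : ℝ × ℝ | q.1 ≤ a ∧ ρ * q.1 + s * q.2 ≤ b}).indicator
        fun q : ℝ × ℝ => stdGaussianPDF q.1 * stdGaussianPDF q.2) (volume.prod volume) :=
    (sgp_integrable.mul_prod sgp_integrable).indicator hS
  rw [bivStdNormalCDF, ← integral_indicator hS, ← integral_indicator measurableSet_Iic]
  rw [show (volume : Measure (ℝ × ℝ)) = volume.prod volume from Measure.volume_eq_prod ℝ ℝ]
  rw [integral_prod _ hint2]
  refine integral_congr_ae (Eventually.of_forall fun x => ?_)
  show _ = (Iic a).indicator _ x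
  rw [Set.indicator_apply]
  simp only [Set.mem_Iic]
  by_cases hx : x ≤ a
  · rw [if_pos hx]
    have hfun : ∀ y : ℝ,
        ({q : ℝ × ℝ | q.1 ≤ a ∧ ρ * q.1 + s * q.2 ≤ b}).indicator
          (fun q : ℝ × ℝ => stdGaussianPDF q.1 * stdGaussianPDF q.2) (x, y)
        = ({y : ℝ | ρ * x + s * y ≤ b}).indicator
            (fun y => stdGaussianPDF x * stdGaussianPDF y) y := by
      intro y
      by_cases hy : ρ * x + s * y ≤ b <;> simp [Set.indicator, hx, hy]
    simp_rw [hfun]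
    rw [integral_indicator (hT x), integral_const_mul]
  · rw [if_neg hx]
    have hfun : ∀ y : ℝ,
        ({q : ℝ × ℝ | q.1 ≤ a ∧ ρ * q.1 + s * q.2 ≤ b}).indicator
          (fun q : ℝ × ℝ => stdGaussianPDF q.1 * stdGaussianPDF q.2) (x, y) = 0 := by
      intro y; simp [Set.indicator, hx]
    simp_rw [hfun, integral_zero]

lemma biv_rep_lt (a b ρ : ℝ) (h : |ρ| < 1) :
    bivStdNormalCDF a b ρ =
      ∫ x in Iic a, stdGaussianPDF x *
        stdNormalCDF ((b - ρ * x) / Real.sqrt (1 - ρ ^ 2)) := by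
  have hpos : 0 < 1 - ρ ^ 2 := by nlinarith [abs_nonneg ρ, sq_abs ρ, abs_lt.1 h]
  have hspos : 0 < Real.sqrt (1 - ρ ^ 2) := Real.sqrt_pos.2 hpos
  rw [biv_rep]
  refine setIntegral_congr_fun measurableSet_Iic fun x _ => ?_
  congr 1
  unfold stdNormalCDF
  have hset : {y : ℝ | ρ * x + Real.sqrt (1 - ρ ^ 2) * y ≤ b}
      = Iic ((b - ρ * x) / Real.sqrt (1 - ρ ^ 2)) := by
    ext y
    simp only [Set.mem_setOf_eq, Set.mem_Iic]
    rw [le_div_iff₀ hspos]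
    constructor <;> intro h' <;> nlinarith
  rw [hset]

lemma biv_zero (a b : ℝ) : bivStdNormalCDF a b 0 = stdNormalCDF a * stdNormalCDF b := by
  rw [biv_rep_lt a b 0 (by norm_num)]
  have : ∀ x : ℝ, (b - 0 * x) / Real.sqrt (1 - 0 ^ 2) = b := by
    intro x; simp
  simp_rw [this, integral_mul_const]
  rfl

lemma biv_rep_one (a b ρ : ℝ) (h : ρ ^ 2 = 1) :
    bivStdNormalCDF a b ρ =
      ∫ x in Iic a, stdGaussianPDF x * (if ρ * x ≤ b then (1:ℝ) else 0) := by
  rw [biv_rep]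
  refine setIntegral_congr_fun measurableSet_Iic fun x _ => ?_
  congr 1
  have hs0 : Real.sqrt (1 - ρ ^ 2) = 0 := by rw [h]; simp
  by_cases hxb : ρ * x ≤ b
  · rw [if_pos hxb]
    have : {y : ℝ | ρ * x + Real.sqrt (1 - ρ ^ 2) * y ≤ b} = Set.univ := by
      ext y; simp [hs0, hxb]
    rw [this, setIntegral_univ, sgp_integral]
  · rw [if_neg hxb]
    have : {y : ℝ | ρ * x + Real.sqrt (1 - ρ ^ 2) * y ≤ b} = ∅ := by
      ext y; simp [hs0, hxb]
    rw [this, setIntegral_empty]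

noncomputable def g2 (t b x : ℝ) : ℝ :=
  (2 * Real.pi * Real.sqrt (1 - t ^ 2))⁻¹ *
    Real.exp (-((x ^ 2 - 2 * t * b * x + b ^ 2) / (2 * (1 - t ^ 2))))

lemma one_sub_sq_pos {t : ℝ} (h : |t| < 1) : 0 < 1 - t ^ 2 := by
  nlinarith [abs_nonneg t, sq_abs t, abs_lt.1 h]

lemma sfn_pos {t : ℝ} (h : |t| < 1) : 0 < Real.sqrt (1 - t ^ 2) :=
  Real.sqrt_pos.2 (one_sub_sq_pos h)

lemma sfn_sq {t : ℝ} (h : |t| < 1) : (Real.sqrt (1 - t ^ 2)) ^ 2 = 1 - t ^ 2 :=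
  Real.sq_sqrt (one_sub_sq_pos h).le

/-- derivative in `t` of `(b - t*x)/√(1-t²)`. -/
lemma u_hasDerivAt (b x : ℝ) {t : ℝ} (h : |t| < 1) :
    HasDerivAt (fun t => (b - t * x) / Real.sqrt (1 - t ^ 2))
      ((t * b - x) / (Real.sqrt (1 - t ^ 2)) ^ 3) t := by
  have hpos := one_sub_sq_pos h
  have hs := sfn_pos h
  have hsq := sfn_sq h
  have hnum : HasDerivAt (fun t : ℝ => b - t * x) (-x) t := by
    simpa using ((hasDerivAt_id t).mul_const x).const_sub b
  have hg : HasDerivAt (fun t : ℝ => 1 - t ^ 2) (-(2 * t)) t := by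
    simpa using (hasDerivAt_pow 2 t).const_sub 1
  have hden : HasDerivAt (fun t => Real.sqrt (1 - t ^ 2))
      (1 / (2 * Real.sqrt (1 - t ^ 2)) * (-(2 * t))) t :=
    (Real.hasDerivAt_sqrt hpos.ne').comp t hg
  have hdiv := hnum.div hden hs.ne'
  have hne : Real.sqrt (1 - t ^ 2) ≠ 0 := hs.ne'
  have e1 : 1 / (2 * Real.sqrt (1 - t ^ 2)) * -(2 * t) = -t / Real.sqrt (1 - t ^ 2) := by
    field_simp
  have e2 : -x * Real.sqrt (1 - t ^ 2) - (b - t * x) * (-t / Real.sqrt (1 - t ^ 2))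
      = (t * b - x) / Real.sqrt (1 - t ^ 2) := by
    field_simp
    linear_combination (-x) * hsq
  refine HasDerivAt.congr_deriv hdiv (Eq.symm ?_)
  rw [e1, e2, div_div]
  rw [show Real.sqrt (1 - t ^ 2) * Real.sqrt (1 - t ^ 2) ^ 2 = Real.sqrt (1 - t ^ 2) ^ 3 from by
    ring]

/-- derivative in `t` of `Φ((b-t*x)/√(1-t²))`. -/
lemma Phi_u_hasDerivAt (b x : ℝ) {t : ℝ} (h : |t| < 1) :
    HasDerivAt (fun t => stdNormalCDF ((b - t * x) / Real.sqrt (1 - t ^ 2)))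
      (stdGaussianPDF ((b - t * x) / Real.sqrt (1 - t ^ 2)) *
        ((t * b - x) / (Real.sqrt (1 - t ^ 2)) ^ 3)) t :=
  (cdf_hasDerivAt _).comp t (u_hasDerivAt b x h)

/-- derivative in `x` of `g2 t b x`, equal to the integrand of Plackett's formula. -/
lemma g2_hasDerivAt (b : ℝ) {t : ℝ} (h : |t| < 1) (x : ℝ) :
    HasDerivAt (fun x => g2 t b x)
      (stdGaussianPDF x * (stdGaussianPDF ((b - t * x) / Real.sqrt (1 - t ^ 2)) *
        ((t * b - x) / (Real.sqrt (1 - t ^ 2)) ^ 3))) x := by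
  have hpos := one_sub_sq_pos h
  have hs := sfn_pos h
  have hsq := sfn_sq h
  have hq : HasDerivAt (fun x : ℝ => -((x ^ 2 - 2 * t * b * x + b ^ 2) / (2 * (1 - t ^ 2))))
      ((t * b - x) / (1 - t ^ 2)) x := by
    have h1 : HasDerivAt (fun x : ℝ => x ^ 2 - 2 * t * b * x + b ^ 2) (2 * x - 2 * t * b) x := by
      have := ((hasDerivAt_pow 2 x).sub ((hasDerivAt_id x).const_mul (2 * t * b))).add_const
        (b ^ 2)
      simpa [mul_comm] using this
    have h2 := (h1.div_const (2 * (1 - t ^ 2))).neg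
    refine HasDerivAt.congr_deriv h2 (Eq.symm ?_)
    field_simp
    ring
  have hd := (hq.exp).const_mul ((2 * Real.pi * Real.sqrt (1 - t ^ 2))⁻¹)
  have : (fun x => g2 t b x) = fun x => (2 * Real.pi * Real.sqrt (1 - t ^ 2))⁻¹ *
      Real.exp (-((x ^ 2 - 2 * t * b * x + b ^ 2) / (2 * (1 - t ^ 2)))) := rfl
  rw [this]
  refine HasDerivAt.congr_deriv hd (Eq.symm ?_)
  -- now an algebraic identity between the two derivative expressions
  unfold stdGaussianPDF
  have hc : (Real.sqrt (2 * Real.pi))⁻¹ * (Real.sqrt (2 * Real.pi))⁻¹ = (2 * Real.pi)⁻¹ := by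
    rw [← mul_inv, Real.mul_self_sqrt Real.two_pi_pos.le]
  have hexp : -x ^ 2 / 2 + -((b - t * x) / Real.sqrt (1 - t ^ 2)) ^ 2 / 2 =
      -((x ^ 2 - 2 * t * b * x + b ^ 2) / (2 * (1 - t ^ 2))) := by
    rw [div_pow, hsq]
    field_simp
    ring
  calc (Real.sqrt (2 * Real.pi))⁻¹ * Real.exp (-x ^ 2 / 2) *
        ((Real.sqrt (2 * Real.pi))⁻¹ *
          Real.exp (-((b - t * x) / Real.sqrt (1 - t ^ 2)) ^ 2 / 2) *
          ((t * b - x) / (Real.sqrt (1 - t ^ 2)) ^ 3))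
      = ((2 * Real.pi)⁻¹ *
          Real.exp (-((x ^ 2 - 2 * t * b * x + b ^ 2) / (2 * (1 - t ^ 2))))) *
          ((t * b - x) / (Real.sqrt (1 - t ^ 2)) ^ 3) := by
        rw [← hexp, Real.exp_add, ← hc]; ring
    _ = (2 * Real.pi * Real.sqrt (1 - t ^ 2))⁻¹ *
          (Real.exp (-((x ^ 2 - 2 * t * b * x + b ^ 2) / (2 * (1 - t ^ 2)))) *
            ((t * b - x) / (1 - t ^ 2))) := by
        have hpow3 : (Real.sqrt (1 - t ^ 2)) ^ 3 = Real.sqrt (1 - t ^ 2) * (1 - t ^ 2) := by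
          rw [pow_succ, hsq, mul_comm]
        rw [hpow3]
        set s := Real.sqrt (1 - t ^ 2) with hsdef
        set E := Real.exp (-((x ^ 2 - 2 * t * b * x + b ^ 2) / (2 * (1 - t ^ 2)))) with hEdef
        have h1 : s ≠ 0 := hs.ne'
        have h2 : (1 : ℝ) - t ^ 2 ≠ 0 := hpos.ne'
        field_simp


lemma abs_le_exp_sq (x : ℝ) : |x| ≤ Real.exp (x ^ 2 / 4) := by
  have h1 : |x| ≤ 1 + x ^ 2 / 4 := by nlinarith [sq_nonneg (|x| - 2), sq_abs x]
  have h2 := Real.add_one_le_exp (x ^ 2 / 4)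
  linarith

lemma gauss4_integrable : Integrable (fun x : ℝ => Real.exp (-x ^ 2 / 4)) := by
  have h := integrable_exp_neg_mul_sq (by norm_num : (0:ℝ) < 1/4)
  convert h using 2 with x
  ring_nf

lemma Fprime_bound (b : ℝ) {t r : ℝ} (hr : |t| ≤ r) (hr1 : r < 1) (x : ℝ) :
    |stdGaussianPDF x * (stdGaussianPDF ((b - t * x) / Real.sqrt (1 - t ^ 2)) *
        ((t * b - x) / (Real.sqrt (1 - t ^ 2)) ^ 3))| ≤
      (|b| + 1) * (2 * Real.pi * (Real.sqrt (1 - r ^ 2)) ^ 3)⁻¹ * Real.exp (-x ^ 2 / 4) := by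
  have ht1 : |t| < 1 := lt_of_le_of_lt hr hr1
  have hr0 : 0 ≤ r := (abs_nonneg t).trans hr
  have hrlt : |r| < 1 := by rwa [abs_of_nonneg hr0]
  have hδ : 0 < Real.sqrt (1 - r ^ 2) := sfn_pos hrlt
  have hs : 0 < Real.sqrt (1 - t ^ 2) := sfn_pos ht1
  have hsle : Real.sqrt (1 - r ^ 2) ≤ Real.sqrt (1 - t ^ 2) := by
    apply Real.sqrt_le_sqrt
    have h2 : t ^ 2 ≤ r ^ 2 := by nlinarith [sq_abs t, abs_nonneg t]
    linarith
  have hcube : (Real.sqrt (1 - r ^ 2)) ^ 3 ≤ (Real.sqrt (1 - t ^ 2)) ^ 3 :=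
    pow_le_pow_left₀ hδ.le hsle 3
  have hq : |(t * b - x) / (Real.sqrt (1 - t ^ 2)) ^ 3| ≤
      (|b| + |x|) / (Real.sqrt (1 - r ^ 2)) ^ 3 := by
    rw [abs_div, abs_of_pos (pow_pos hs 3)]
    apply div_le_div₀ (by positivity) ?_ (pow_pos hδ 3) hcube
    calc |t * b - x| ≤ |t * b| + |x| := by
          simpa [sub_eq_add_neg, abs_neg] using abs_add_le (t * b) (-x)
      _ ≤ |b| + |x| := by
          rw [abs_mul]
          nlinarith [abs_nonneg b, abs_nonneg t, ht1.le]
  have hphiu : stdGaussianPDF ((b - t * x) / Real.sqrt (1 - t ^ 2)) ≤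
      (Real.sqrt (2 * Real.pi))⁻¹ := by
    unfold stdGaussianPDF
    have h1 : Real.exp (-((b - t * x) / Real.sqrt (1 - t ^ 2)) ^ 2 / 2) ≤ 1 := by
      rw [Real.exp_le_one_iff]
      nlinarith [sq_nonneg ((b - t * x) / Real.sqrt (1 - t ^ 2))]
    nlinarith [inv_nonneg.2 (Real.sqrt_nonneg (2 * Real.pi))]
  have hc : (Real.sqrt (2 * Real.pi))⁻¹ * (Real.sqrt (2 * Real.pi))⁻¹ = (2 * Real.pi)⁻¹ := by
    rw [← mul_inv, Real.mul_self_sqrt Real.two_pi_pos.le]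
  have key : (|b| + |x|) * Real.exp (-x ^ 2 / 2) ≤ (|b| + 1) * Real.exp (-x ^ 2 / 4) := by
    have h1 : |x| * Real.exp (-x ^ 2 / 2) ≤ Real.exp (-x ^ 2 / 4) := by
      have h2 := abs_le_exp_sq x
      have h3 : Real.exp (x ^ 2 / 4) * Real.exp (-x ^ 2 / 2) = Real.exp (-x ^ 2 / 4) := by
        rw [← Real.exp_add]; ring_nf
      nlinarith [Real.exp_pos (-x ^ 2 / 2), Real.exp_pos (-x ^ 2 / 4)]
    have h4 : |b| * Real.exp (-x ^ 2 / 2) ≤ |b| * Real.exp (-x ^ 2 / 4) :=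
      mul_le_mul_of_nonneg_left (Real.exp_le_exp.2 (by nlinarith [sq_nonneg x])) (abs_nonneg b)
    nlinarith
  calc |stdGaussianPDF x * (stdGaussianPDF ((b - t * x) / Real.sqrt (1 - t ^ 2)) *
        ((t * b - x) / (Real.sqrt (1 - t ^ 2)) ^ 3))|
      = stdGaussianPDF x * (stdGaussianPDF ((b - t * x) / Real.sqrt (1 - t ^ 2)) *
          |(t * b - x) / (Real.sqrt (1 - t ^ 2)) ^ 3|) := by
        rw [abs_mul, abs_mul, abs_of_nonneg (sgp_nonneg _), abs_of_nonneg (sgp_nonneg _)]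
    _ ≤ ((Real.sqrt (2 * Real.pi))⁻¹ * Real.exp (-x ^ 2 / 2)) *
          ((Real.sqrt (2 * Real.pi))⁻¹ * ((|b| + |x|) / (Real.sqrt (1 - r ^ 2)) ^ 3)) := by
        apply mul_le_mul (le_of_eq rfl) ?_
          (mul_nonneg (sgp_nonneg _) (abs_nonneg _))
          (mul_nonneg (inv_nonneg.2 (Real.sqrt_nonneg _)) (Real.exp_pos _).le)
        exact mul_le_mul hphiu hq (abs_nonneg _) (inv_nonneg.2 (Real.sqrt_nonneg _))
    _ = ((|b| + |x|) * Real.exp (-x ^ 2 / 2)) * (2 * Real.pi * (Real.sqrt (1 - r ^ 2)) ^ 3)⁻¹ := by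
        linear_combination (Real.exp (-x ^ 2 / 2) * (|b| + |x|) *
          ((Real.sqrt (1 - r ^ 2) ^ 3)⁻¹)) * hc
    _ ≤ ((|b| + 1) * Real.exp (-x ^ 2 / 4)) * (2 * Real.pi * (Real.sqrt (1 - r ^ 2)) ^ 3)⁻¹ :=
        mul_le_mul_of_nonneg_right key (by positivity)
    _ = (|b| + 1) * (2 * Real.pi * (Real.sqrt (1 - r ^ 2)) ^ 3)⁻¹ * Real.exp (-x ^ 2 / 4) := by
        ring

lemma Fprime_cont (b : ℝ) {t : ℝ} (h : |t| < 1) :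
    Continuous (fun x => stdGaussianPDF x *
      (stdGaussianPDF ((b - t * x) / Real.sqrt (1 - t ^ 2)) *
        ((t * b - x) / (Real.sqrt (1 - t ^ 2)) ^ 3))) := by
  apply sgp_cont.mul
  apply Continuous.mul
  · exact sgp_cont.comp ((continuous_const.sub (continuous_const.mul continuous_id)).div_const _)
  · exact (continuous_const.sub continuous_id).div_const _

lemma g2_tendsto_atBot (b : ℝ) {t : ℝ} (h : |t| < 1) :
    Tendsto (fun x => g2 t b x) atBot (𝓝 0) := by
  have hpos := one_sub_sq_pos h
  have h0 : Tendsto (fun x : ℝ => x + -(t * b)) atBot atBot :=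
    tendsto_atBot_add_const_right _ _ tendsto_id
  have h1 : Tendsto (fun x : ℝ => |x + -(t * b)|) atBot atTop :=
    tendsto_abs_atBot_atTop.comp h0
  have h2 : Tendsto (fun x : ℝ => |x + -(t * b)| ^ 2) atBot atTop :=
    (tendsto_pow_atTop (n := 2) (by norm_num)).comp h1
  have h3 : Tendsto (fun x : ℝ => x ^ 2 - 2 * t * b * x + b ^ 2) atBot atTop := by
    have h4 := tendsto_atTop_add_const_right atBot (b ^ 2 - t ^ 2 * b ^ 2) h2
    refine h4.congr fun x => ?_
    rw [sq_abs]; ring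
  have h5 : Tendsto (fun x : ℝ => (x ^ 2 - 2 * t * b * x + b ^ 2) / (2 * (1 - t ^ 2)))
      atBot atTop := h3.atTop_div_const (by linarith)
  have h6 : Tendsto (fun x : ℝ => -((x ^ 2 - 2 * t * b * x + b ^ 2) / (2 * (1 - t ^ 2))))
      atBot atBot := tendsto_neg_atTop_atBot.comp h5
  have h7 := Real.tendsto_exp_atBot.comp h6
  have h8 := h7.const_mul ((2 * Real.pi * Real.sqrt (1 - t ^ 2))⁻¹)
  rw [mul_zero] at h8
  exact h8

lemma integral_Fprime (a b : ℝ) {t : ℝ} (h : |t| < 1) :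
    ∫ x in Iic a, stdGaussianPDF x *
      (stdGaussianPDF ((b - t * x) / Real.sqrt (1 - t ^ 2)) *
        ((t * b - x) / (Real.sqrt (1 - t ^ 2)) ^ 3)) = g2 t b a := by
  have hint : IntegrableOn (fun x => stdGaussianPDF x *
      (stdGaussianPDF ((b - t * x) / Real.sqrt (1 - t ^ 2)) *
        ((t * b - x) / (Real.sqrt (1 - t ^ 2)) ^ 3))) (Iic a) volume := by
    apply Integrable.mono'
      ((gauss4_integrable.const_mul
        ((|b| + 1) * (2 * Real.pi * (Real.sqrt (1 - |t| ^ 2)) ^ 3)⁻¹)).integrableOn)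
      ((Fprime_cont b h).aestronglyMeasurable.restrict)
    refine Eventually.of_forall fun x => ?_
    simpa only [Real.norm_eq_abs, sq_abs] using Fprime_bound b (le_refl |t|) h x
  have := integral_Iic_of_hasDerivAt_of_tendsto
    (((g2_hasDerivAt b h a).continuousAt).continuousWithinAt)
    (fun x _ => g2_hasDerivAt b h x) hint (g2_tendsto_atBot b h)
  rw [this, sub_zero]

lemma K_hasDerivAt (a b : ℝ) {t₀ : ℝ} (h : |t₀| < 1) :
    HasDerivAt (fun t => ∫ x in Iic a,
        stdGaussianPDF x * stdNormalCDF ((b - t * x) / Real.sqrt (1 - t ^ 2)))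
      (g2 t₀ b a) t₀ := by
  set r := (1 + |t₀|) / 2 with hrdef
  have hr1 : r < 1 := by rw [hrdef]; linarith
  have hε : 0 < (1 - |t₀|) / 2 := by linarith
  have hball : ∀ t ∈ Metric.ball t₀ ((1 - |t₀|) / 2), |t| ≤ r := by
    intro t ht
    rw [Metric.mem_ball, Real.dist_eq] at ht
    have h1 : |t| - |t₀| ≤ |t - t₀| := abs_sub_abs_le_abs_sub t t₀
    rw [hrdef]; linarith
  have hcontF : ∀ t : ℝ, Continuous (fun x =>
      stdGaussianPDF x * stdNormalCDF ((b - t * x) / Real.sqrt (1 - t ^ 2))) := by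
    intro t
    exact sgp_cont.mul (cdf_cont.comp
      ((continuous_const.sub (continuous_const.mul continuous_id)).div_const _))
  have hres := hasDerivAt_integral_of_dominated_loc_of_deriv_le
    (μ := volume.restrict (Iic a)) (x₀ := t₀)
    (F := fun t x => stdGaussianPDF x * stdNormalCDF ((b - t * x) / Real.sqrt (1 - t ^ 2)))
    (F' := fun t x => stdGaussianPDF x *
      (stdGaussianPDF ((b - t * x) / Real.sqrt (1 - t ^ 2)) *
        ((t * b - x) / (Real.sqrt (1 - t ^ 2)) ^ 3)))
    (bound := fun x => (|b| + 1) * (2 * Real.pi * (Real.sqrt (1 - r ^ 2)) ^ 3)⁻¹ *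
      Real.exp (-x ^ 2 / 4))
    (Metric.ball_mem_nhds t₀ hε)
    (Eventually.of_forall fun t => ((hcontF t).aestronglyMeasurable.restrict))
    ?_ ?_ ?_ ?_ ?_
  · have h2 := hres.2
    rwa [integral_Fprime a b h] at h2
  · -- Integrable (F t₀)
    apply Integrable.mono' (sgp_integrable.integrableOn)
      ((hcontF t₀).aestronglyMeasurable.restrict)
    refine Eventually.of_forall fun x => ?_
    rw [Real.norm_eq_abs, abs_mul, abs_of_nonneg (sgp_nonneg _),
      abs_of_nonneg (cdf_nonneg _)]
    nlinarith [sgp_nonneg x, cdf_le_one ((b - t₀ * x) / Real.sqrt (1 - t₀ ^ 2)),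
      cdf_nonneg ((b - t₀ * x) / Real.sqrt (1 - t₀ ^ 2))]
  · exact ((Fprime_cont b h).aestronglyMeasurable.restrict)
  · refine Eventually.of_forall fun x => fun t ht => ?_
    rw [Real.norm_eq_abs]
    exact Fprime_bound b (hball t ht) hr1 x
  · exact ((gauss4_integrable.const_mul _).integrableOn)
  · refine Eventually.of_forall fun x => fun t ht => ?_
    exact (Phi_u_hasDerivAt b x (lt_of_le_of_lt (hball t ht) hr1)).const_mul (stdGaussianPDF x)

lemma g2_nonneg (t b x : ℝ) : 0 ≤ g2 t b x := by
  unfold g2; positivity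

lemma g2_le (a b : ℝ) {t : ℝ} (h : |t| < 1) :
    g2 t b a ≤ (2 * Real.pi)⁻¹ * Real.exp (-(a ^ 2 + b ^ 2) / 4) *
      (1 / Real.sqrt (1 - t ^ 2)) := by
  have hpos := one_sub_sq_pos h
  have hs := sfn_pos h
  have key : -((a ^ 2 - 2 * t * b * a + b ^ 2) / (2 * (1 - t ^ 2))) ≤
      -(a ^ 2 + b ^ 2) / 4 := by
    rw [neg_div, neg_le_neg_iff, div_le_div_iff₀ (by norm_num) (by linarith)]
    nlinarith [sq_nonneg (t * a - b), sq_nonneg (a - t * b)]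
  have hE := Real.exp_le_exp.2 key
  unfold g2
  calc (2 * Real.pi * Real.sqrt (1 - t ^ 2))⁻¹ *
        Real.exp (-((a ^ 2 - 2 * t * b * a + b ^ 2) / (2 * (1 - t ^ 2)))) ≤
      (2 * Real.pi * Real.sqrt (1 - t ^ 2))⁻¹ * Real.exp (-(a ^ 2 + b ^ 2) / 4) :=
        mul_le_mul_of_nonneg_left hE (by positivity)
    _ = (2 * Real.pi)⁻¹ * Real.exp (-(a ^ 2 + b ^ 2) / 4) * (1 / Real.sqrt (1 - t ^ 2)) := by
        rw [mul_inv]; ring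
  
lemma g2_contAt (b a : ℝ) {t : ℝ} (h : |t| < 1) :
    ContinuousAt (fun t => g2 t b a) t := by
  have hpos := one_sub_sq_pos h
  have hs := sfn_pos h
  unfold g2
  apply ContinuousAt.mul
  · apply ContinuousAt.inv₀
    · exact (continuous_const.mul ((continuous_const.sub (continuous_pow 2)).sqrt)).continuousAt
    · positivity
  · apply Real.continuous_exp.continuousAt.comp
    apply ContinuousAt.neg
    apply ContinuousAt.div
    · fun_prop
    · fun_prop
    · intro h'; nlinarith

lemma arcsin_le_bound {ρ : ℝ} (h0 : 0 ≤ ρ) (h1 : ρ ≤ 1) : Real.arcsin ρ ≤ π / 2 * ρ := by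
  have h2 := Real.mul_le_sin (x := Real.arcsin ρ) (Real.arcsin_nonneg.2 h0)
    (Real.arcsin_le_pi_div_two ρ)
  rw [Real.sin_arcsin (by linarith) h1] at h2
  have hπ := Real.pi_pos
  have h3 : π / 2 * (2 / π * Real.arcsin ρ) ≤ π / 2 * ρ :=
    mul_le_mul_of_nonneg_left h2 (by positivity)
  have h4 : π / 2 * (2 / π * Real.arcsin ρ) = Real.arcsin ρ := by field_simp
  linarith

lemma main_lt (a b ρ : ℝ) (h : |ρ| < 1) :
    |bivStdNormalCDF a b ρ - stdNormalCDF a * stdNormalCDF b| ≤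
      |ρ| / 4 * Real.exp (-(a ^ 2 + b ^ 2) / 4) := by
  have habs : ∀ t ∈ uIcc (0:ℝ) ρ, |t| < 1 := by
    intro t ht
    rw [Set.mem_uIcc] at ht
    have hρ := abs_lt.1 h
    rcases ht with ⟨h1, h2⟩ | ⟨h1, h2⟩ <;> rw [abs_lt] <;> constructor <;> linarith
  have hderiv : ∀ t ∈ uIcc (0:ℝ) ρ, HasDerivAt
      (fun t => ∫ x in Iic a,
        stdGaussianPDF x * stdNormalCDF ((b - t * x) / Real.sqrt (1 - t ^ 2)))
      (g2 t b a) t := fun t ht => K_hasDerivAt a b (habs t ht)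
  have hcontg : ∀ t ∈ uIcc (0:ℝ) ρ, ContinuousWithinAt (fun t => g2 t b a) (uIcc (0:ℝ) ρ) t :=
    fun t ht => (g2_contAt b a (habs t ht)).continuousWithinAt
  have hint : IntervalIntegrable (fun t => g2 t b a) volume 0 ρ :=
    ContinuousOn.intervalIntegrable hcontg
  have heq := intervalIntegral.integral_eq_sub_of_hasDerivAt hderiv hint
  have hKρ : (∫ x in Iic a,
      stdGaussianPDF x * stdNormalCDF ((b - ρ * x) / Real.sqrt (1 - ρ ^ 2)))
      = bivStdNormalCDF a b ρ := (biv_rep_lt a b ρ h).symm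
  have hK0 : (∫ x in Iic a,
      stdGaussianPDF x * stdNormalCDF ((b - 0 * x) / Real.sqrt (1 - 0 ^ 2)))
      = stdNormalCDF a * stdNormalCDF b := by
    rw [← biv_zero a b]
    exact (biv_rep_lt a b 0 (by norm_num)).symm
  have key : bivStdNormalCDF a b ρ - stdNormalCDF a * stdNormalCDF b
      = ∫ t in (0:ℝ)..ρ, g2 t b a := by
    rw [← hKρ, ← hK0]
    exact heq.symm
  rw [key]
  have hEpos : (0:ℝ) < Real.exp (-(a ^ 2 + b ^ 2) / 4) := Real.exp_pos _
  set E := Real.exp (-(a ^ 2 + b ^ 2) / 4) with hEdef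
  have harc : ∀ t ∈ uIcc (0:ℝ) ρ, HasDerivAt (fun t => (2 * π)⁻¹ * E * Real.arcsin t)
      ((2 * π)⁻¹ * E * (1 / Real.sqrt (1 - t ^ 2))) t := by
    intro t ht
    have h1 := abs_lt.1 (habs t ht)
    exact (Real.hasDerivAt_arcsin h1.1.ne' h1.2.ne).const_mul _
  have hint2 : IntervalIntegrable (fun t => (2 * π)⁻¹ * E * (1 / Real.sqrt (1 - t ^ 2)))
      volume 0 ρ := by
    apply ContinuousOn.intervalIntegrable
    intro t ht
    have h1 := habs t ht
    apply ContinuousAt.continuousWithinAt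
    apply ContinuousAt.mul continuousAt_const
    apply ContinuousAt.div continuousAt_const
    · exact ((continuous_const.sub (continuous_pow 2)).sqrt).continuousAt
    · exact (sfn_pos h1).ne'
  have harcint := intervalIntegral.integral_eq_sub_of_hasDerivAt harc hint2
  have hptwise : ∀ t ∈ uIcc (0:ℝ) ρ, g2 t b a ≤ (2 * π)⁻¹ * E * (1 / Real.sqrt (1 - t ^ 2)) :=
    fun t ht => g2_le a b (habs t ht)
  rcases le_or_gt 0 ρ with h0 | h0
  · have hmono := intervalIntegral.integral_mono_on h0 hint hint2
      (fun t ht => hptwise t (by rwa [uIcc_of_le h0]))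
    have hnn : 0 ≤ ∫ t in (0:ℝ)..ρ, g2 t b a :=
      intervalIntegral.integral_nonneg h0 (fun t _ => g2_nonneg _ _ _)
    rw [abs_of_nonneg hnn]
    calc (∫ t in (0:ℝ)..ρ, g2 t b a)
        ≤ ∫ t in (0:ℝ)..ρ, (2 * π)⁻¹ * E * (1 / Real.sqrt (1 - t ^ 2)) := hmono
      _ = (2 * π)⁻¹ * E * Real.arcsin ρ := by
          rw [harcint, Real.arcsin_zero]; ring
      _ ≤ (2 * π)⁻¹ * E * (π / 2 * ρ) :=
          mul_le_mul_of_nonneg_left (arcsin_le_bound h0 (abs_lt.1 h).2.le) (by positivity)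
      _ = |ρ| / 4 * E := by
          rw [abs_of_nonneg h0]
          field_simp
          ring
  · have hle : ρ ≤ 0 := h0.le
    have hicc : Icc ρ 0 = uIcc (0:ℝ) ρ := by rw [uIcc_of_ge hle]
    have hmono := intervalIntegral.integral_mono_on hle hint.symm hint2.symm
      (fun t ht => hptwise t (by rwa [← hicc]))
    have hnn : 0 ≤ ∫ t in ρ..(0:ℝ), g2 t b a :=
      intervalIntegral.integral_nonneg hle (fun t _ => g2_nonneg _ _ _)
    have hsymm : (∫ t in (0:ℝ)..ρ, g2 t b a) = -∫ t in ρ..(0:ℝ), g2 t b a := by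
      rw [← intervalIntegral.integral_symm]
    rw [hsymm, abs_neg, abs_of_nonneg hnn]
    have harcint2 : (∫ t in ρ..(0:ℝ), (2 * π)⁻¹ * E * (1 / Real.sqrt (1 - t ^ 2)))
        = (2 * π)⁻¹ * E * (-Real.arcsin ρ) := by
      have hd : ∀ t ∈ uIcc ρ (0:ℝ), HasDerivAt (fun t => (2 * π)⁻¹ * E * Real.arcsin t)
          ((2 * π)⁻¹ * E * (1 / Real.sqrt (1 - t ^ 2))) t := by
        intro t ht; exact harc t (by rwa [uIcc_comm])
      rw [intervalIntegral.integral_eq_sub_of_hasDerivAt hd hint2.symm, Real.arcsin_zero]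
      ring
    calc (∫ t in ρ..(0:ℝ), g2 t b a)
        ≤ ∫ t in ρ..(0:ℝ), (2 * π)⁻¹ * E * (1 / Real.sqrt (1 - t ^ 2)) := hmono
      _ = (2 * π)⁻¹ * E * (-Real.arcsin ρ) := harcint2
      _ = (2 * π)⁻¹ * E * Real.arcsin (-ρ) := by rw [Real.arcsin_neg]
      _ ≤ (2 * π)⁻¹ * E * (π / 2 * (-ρ)) :=
          mul_le_mul_of_nonneg_left
            (arcsin_le_bound (by linarith) (by linarith [(abs_lt.1 h).1])) (by positivity)
      _ = |ρ| / 4 * E := by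
          rw [abs_of_nonpos hle]
          field_simp
          ring

lemma main_endpoint (a b ρ : ℝ) (h : ρ ^ 2 = 1) :
    |bivStdNormalCDF a b ρ - stdNormalCDF a * stdNormalCDF b| ≤
      |ρ| / 4 * Real.exp (-(a ^ 2 + b ^ 2) / 4) := by
  have habs1 : |ρ| = 1 := by
    have h2 : |ρ| ^ 2 = 1 := by rw [sq_abs]; exact h
    nlinarith [abs_nonneg ρ]
  -- the approximating sequence
  set u : ℕ → ℝ := fun n => 1 - 1 / ((n : ℝ) + 2) with hudef
  have hu01 : ∀ n, 0 ≤ u n ∧ u n < 1 := by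
    intro n
    have h1 : (0:ℝ) < (n : ℝ) + 2 := by positivity
    constructor
    · have : 1 / ((n : ℝ) + 2) ≤ 1 := by rw [div_le_one h1]; linarith
      simp only [hudef]; linarith
    · have : 0 < 1 / ((n : ℝ) + 2) := by positivity
      simp only [hudef]; linarith
  have hulim : Tendsto u atTop (𝓝 1) := by
    have h1 : Tendsto (fun n : ℕ => (n : ℝ) + 2) atTop atTop :=
      tendsto_atTop_add_const_right _ _ tendsto_natCast_atTop_atTop
    have h2 : Tendsto (fun n : ℕ => ((n : ℝ) + 2)⁻¹) atTop (𝓝 0) := h1.inv_tendsto_atTop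
    have h3 := h2.const_sub 1
    rw [sub_zero] at h3
    refine h3.congr fun n => ?_
    simp [hudef, one_div]
  set tseq : ℕ → ℝ := fun n => ρ * u n with htdef
  have htlt : ∀ n, |tseq n| < 1 := by
    intro n
    rw [htdef]
    simp only []
    rw [abs_mul, habs1, one_mul, abs_of_nonneg (hu01 n).1]
    exact (hu01 n).2
  have htlim : Tendsto tseq atTop (𝓝 ρ) := by
    have := hulim.const_mul ρ
    rwa [mul_one] at this
  -- convergence of the bivariate CDF values
  have hs0 : Tendsto (fun n => Real.sqrt (1 - tseq n ^ 2)) atTop (𝓝 0) := by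
    have hc : Continuous (fun t : ℝ => Real.sqrt (1 - t ^ 2)) :=
      (continuous_const.sub (continuous_pow 2)).sqrt
    have h1 := (hc.continuousAt (x := ρ)).tendsto.comp htlim
    have h2 : Real.sqrt (1 - ρ ^ 2) = 0 := by rw [h]; simp
    rwa [h2] at h1
  have hsinv : Tendsto (fun n => (Real.sqrt (1 - tseq n ^ 2))⁻¹) atTop atTop := by
    apply tendsto_inv_nhdsGT_zero.comp
    apply tendsto_nhdsWithin_of_tendsto_nhds_of_eventually_within _ hs0
    exact Eventually.of_forall fun n => sfn_pos (htlt n)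
  have hae : ∀ᵐ x : ℝ ∂(volume.restrict (Iic a)), x ≠ ρ * b := by
    apply ae_restrict_of_ae
    rw [ae_iff]
    have : {x : ℝ | ¬x ≠ ρ * b} = {ρ * b} := by ext x; simp
    rw [this]
    exact measure_singleton _
  have hDCT : Tendsto (fun n => bivStdNormalCDF a b (tseq n)) atTop
      (𝓝 (bivStdNormalCDF a b ρ)) := by
    have hrep : ∀ n, bivStdNormalCDF a b (tseq n) =
        ∫ x in Iic a, stdGaussianPDF x *
          stdNormalCDF ((b - tseq n * x) / Real.sqrt (1 - tseq n ^ 2)) :=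
      fun n => biv_rep_lt a b (tseq n) (htlt n)
    rw [biv_rep_one a b ρ h]
    simp_rw [hrep]
    apply tendsto_integral_of_dominated_convergence stdGaussianPDF
    · intro n
      exact ((sgp_cont.mul (cdf_cont.comp
        ((continuous_const.sub (continuous_const.mul continuous_id)).div_const _))).aestronglyMeasurable.restrict)
    · exact sgp_integrable.integrableOn
    · intro n
      refine Eventually.of_forall fun x => ?_
      rw [Real.norm_eq_abs, abs_mul, abs_of_nonneg (sgp_nonneg _), abs_of_nonneg (cdf_nonneg _)]
      nlinarith [sgp_nonneg x, cdf_le_one ((b - tseq n * x) / Real.sqrt (1 - tseq n ^ 2)),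
        cdf_nonneg ((b - tseq n * x) / Real.sqrt (1 - tseq n ^ 2))]
    · filter_upwards [hae] with x hx
      have hnum : Tendsto (fun n => b - tseq n * x) atTop (𝓝 (b - ρ * x)) :=
        tendsto_const_nhds.sub (htlim.mul_const x)
      have hne : ρ * x ≠ b := by
        intro he
        apply hx
        have : ρ * (ρ * x) = ρ * b := by rw [he]
        rwa [← mul_assoc, ← sq, h, one_mul] at this
      rcases lt_or_gt_of_ne hne with hlt | hgt
      · rw [if_pos hlt.le]
        have hArg : Tendsto (fun n => (b - tseq n * x) / Real.sqrt (1 - tseq n ^ 2))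
            atTop atTop := by
          simp_rw [div_eq_mul_inv]
          exact Tendsto.pos_mul_atTop (by linarith) hnum hsinv
        exact (cdf_tendsto_atTop.comp hArg).const_mul (stdGaussianPDF x)
      · rw [if_neg (not_le.2 hgt)]
        have hArg : Tendsto (fun n => (b - tseq n * x) / Real.sqrt (1 - tseq n ^ 2))
            atTop atBot := by
          simp_rw [div_eq_mul_inv]
          exact Tendsto.neg_mul_atTop (by linarith) hnum hsinv
        exact (cdf_tendsto_atBot.comp hArg).const_mul (stdGaussianPDF x)
  -- take the limit in the bound
  have hbound : ∀ n, |bivStdNormalCDF a b (tseq n) - stdNormalCDF a * stdNormalCDF b| ≤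
      |ρ| / 4 * Real.exp (-(a ^ 2 + b ^ 2) / 4) := by
    intro n
    refine (main_lt a b (tseq n) (htlt n)).trans ?_
    have h1 : |tseq n| ≤ |ρ| := by rw [habs1]; exact (htlt n).le
    have h2 : (0:ℝ) < Real.exp (-(a ^ 2 + b ^ 2) / 4) := Real.exp_pos _
    nlinarith
  have hlim2 : Tendsto (fun n => |bivStdNormalCDF a b (tseq n) -
      stdNormalCDF a * stdNormalCDF b|) atTop
      (𝓝 (|bivStdNormalCDF a b ρ - stdNormalCDF a * stdNormalCDF b|)) :=
    ((hDCT.sub tendsto_const_nhds).abs)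
  exact le_of_tendsto hlim2 (Eventually.of_forall hbound)

/-- The Gaussian copula term `C(a,b,ρ) = Φ₂(a,b,ρ) − Φ(a)Φ(b)` satisfies
`|C(a,b,ρ)| ≤ (|ρ|/4) exp(−(a²+b²)/4)` for all `a, b ∈ ℝ` and `ρ ∈ [−1,1]`. -/
theorem gaussian_copula_bound (a b ρ : ℝ) (hρ : ρ ∈ Set.Icc (-1 : ℝ) 1) :
    |bivStdNormalCDF a b ρ - stdNormalCDF a * stdNormalCDF b| ≤
      |ρ| / 4 * Real.exp (-(a ^ 2 + b ^ 2) / 4) := by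
  have hle : |ρ| ≤ 1 := abs_le.2 ⟨hρ.1, hρ.2⟩
  rcases lt_or_eq_of_le hle with h1 | h1
  · exact main_lt a b ρ h1
  · exact main_endpoint a b ρ (by rw [← sq_abs, h1]; norm_num)
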